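/- For a simple undirected 2-vertex-connected graph G, the set system (V(G), C_v), where C_v is the family of vertex subsets inducing 2-vertex-connected subgraphs, has subset-disjoint (SD) property: for any C, C' ∈ C_v with C' ⊊ C and any minimal removable set Y of C, either Y ⊆ C' or Y ∩ C' = ∅. -/

import Mathlib

open Set

/-- `Y` is a minimal removable set (MRS) of component `C` in set system `𝒞`. -/
def IsMRS {α : Type*} (𝒞 : Set (Set α)) (C Y : Set α) : Prop :=
  Y.Nonempty ∧ Y ⊆ C ∧ C \ Y ∈ 𝒞 ∧ ∀ Z : Set α, Z.Nonempty → Z ⊂ Y → C \ Z ∉ 𝒞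

/-- The set system `𝒞` has the subset-disjoint (SD) property. -/
def SDProperty {α : Type*} (𝒞 : Set (Set α)) : Prop :=
  ∀ C ∈ 𝒞, ∀ C' ∈ 𝒞, C' ⊂ C → ∀ Y : Set α, IsMRS 𝒞 C Y → Y ⊆ C' ∨ Y ∩ C' = ∅

/-- A graph is 2-edge-connected: connected and has no bridge. -/
def TwoEC {V : Type*} (H : SimpleGraph V) : Prop :=
  H.Connected ∧ ∀ e : Sym2 V, ¬ H.IsBridge e

/-- A graph is 2-vertex-connected: more than 2 vertices and removing any vertex keeps it connected. -/
def TwoVC {V : Type*} (H : SimpleGraph V) : Prop :=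
  2 < Nat.card V ∧ ∀ v : V, (H.induce ({v}ᶜ : Set V)).Connected

/-- Family of vertex subsets of size `> 1` inducing 2-edge-connected subgraphs. -/
def Ce {V : Type*} (G : SimpleGraph V) : Set (Set V) :=
  {C | TwoEC (G.induce C) ∧ 1 < C.ncard}

/-- Family of vertex subsets inducing 2-vertex-connected subgraphs. -/
def Cv {V : Type*} (G : SimpleGraph V) : Set (Set V) :=
  {C | TwoVC (G.induce C)}

/-- Degree of `v` in the induced subgraph `G[C]`. -/
noncomputable def degIn {V : Type*} (G : SimpleGraph V) (C : Set V) (v : V) : ℕ :=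
  (G.neighborSet v ∩ C).ncard

/-- `P` is a two-deg path in `G[C]`: all vertices of degree 2, inducing a connected subgraph. -/
def TwoDegPath {V : Type*} (G : SimpleGraph V) (C P : Set V) : Prop :=
  P ⊆ C ∧ (∀ u ∈ P, degIn G C u = 2) ∧ (G.induce P).Connected

/-- `P` is a maximal two-deg path in `G[C]`. -/
def MaxTwoDegPath {V : Type*} (G : SimpleGraph V) (C P : Set V) : Prop :=
  TwoDegPath G C P ∧ ∀ P' : Set V, TwoDegPath G C P' → P ⊆ P' → P' = P

/-- `Y` is a candidate of `C`: a maximal two-deg path or a singleton of a vertex of degree `> 2`. -/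
def Can {V : Type*} (G : SimpleGraph V) (C Y : Set V) : Prop :=
  MaxTwoDegPath G C Y ∨ ∃ v ∈ C, 2 < degIn G C v ∧ Y = {v}

/-- A graph is a cycle: connected and every vertex has exactly two neighbours. -/
def IsCycleGraph {W : Type*} (H : SimpleGraph W) : Prop :=
  H.Connected ∧ ∀ v : W, (H.neighborSet v).ncard = 2

/-- `S` is a maximal subset of `C` inducing a 2-vertex-connected subgraph. -/
def IsMaxVComp {V : Type*} (G : SimpleGraph V) (C S : Set V) : Prop :=
  S ⊆ C ∧ TwoVC (G.induce S) ∧ ∀ S' : Set V, S ⊆ S' → S' ⊆ C → TwoVC (G.induce S') → S' = S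


section SDProof

variable {V : Type*} {G : SimpleGraph V}

open SimpleGraph

/-- Reachability within a vertex set `S`. -/
def ReachIn (G : SimpleGraph V) (S : Set V) (a b : V) : Prop :=
  ∃ w : G.Walk a b, ∀ x ∈ w.support, x ∈ S

/-- Connectivity of the induced subgraph on `S`, phrased with walks in `G`. -/
def ConnOn (G : SimpleGraph V) (S : Set V) : Prop :=
  S.Nonempty ∧ ∀ a ∈ S, ∀ b ∈ S, ReachIn G S a b

def TwoVCOn (G : SimpleGraph V) (S : Set V) : Prop :=
  2 < S.ncard ∧ ∀ v ∈ S, ConnOn G (S \ {v})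

lemma ReachIn.refl {S : Set V} {a : V} (ha : a ∈ S) : ReachIn G S a a :=
  ⟨Walk.nil, by simp [ha]⟩

lemma ReachIn.symm {S : Set V} {a b : V} (h : ReachIn G S a b) : ReachIn G S b a := by
  obtain ⟨w, hw⟩ := h
  exact ⟨w.reverse, by simpa [Walk.support_reverse] using hw⟩

lemma ReachIn.trans {S : Set V} {a b c : V} (h1 : ReachIn G S a b) (h2 : ReachIn G S b c) :
    ReachIn G S a c := by
  obtain ⟨w1, hw1⟩ := h1; obtain ⟨w2, hw2⟩ := h2
  refine ⟨w1.append w2, fun x hx => ?_⟩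
  rcases (Walk.mem_support_append_iff _ _).1 hx with h | h
  · exact hw1 x h
  · exact hw2 x h

lemma ReachIn.mono {S T : Set V} (hST : S ⊆ T) {a b : V} (h : ReachIn G S a b) :
    ReachIn G T a b := by
  obtain ⟨w, hw⟩ := h; exact ⟨w, fun x hx => hST (hw x hx)⟩

lemma ReachIn.mem_left {S : Set V} {a b : V} (h : ReachIn G S a b) : a ∈ S := by
  obtain ⟨w, hw⟩ := h; exact hw a w.start_mem_support

lemma ReachIn.mem_right {S : Set V} {a b : V} (h : ReachIn G S a b) : b ∈ S := by
  obtain ⟨w, hw⟩ := h; exact hw b w.end_mem_support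

lemma reachIn_of_adj {S : Set V} {a b : V} (h : G.Adj a b) (ha : a ∈ S) (hb : b ∈ S) :
    ReachIn G S a b := ⟨Walk.cons h Walk.nil, by simp [ha, hb]⟩

private lemma reach_of_walk_in_induce {S : Set V} :
    ∀ {a b : S} (_ : (G.induce S).Walk a b), ReachIn G S a.1 b.1 := by
  intro a b w
  induction w with
  | nil => exact ⟨Walk.nil, by simp⟩
  | @cons u v w h p ih =>
    obtain ⟨w2, hw2⟩ := ih
    exact ⟨Walk.cons h w2, by
      intro x hx
      rcases List.mem_cons.1 (show x ∈ (u : V) :: w2.support from hx) with rfl | hx'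
      · exact u.2
      · exact hw2 x hx'⟩

private lemma walk_induce_of_reach {S : Set V} :
    ∀ {a b : V} (w : G.Walk a b) (_ : ∀ x ∈ w.support, x ∈ S),
      (G.induce S).Reachable ⟨a, by exact (by simpa using ‹∀ x ∈ w.support, x ∈ S› a w.start_mem_support)⟩
        ⟨b, by exact (by simpa using ‹∀ x ∈ w.support, x ∈ S› b w.end_mem_support)⟩ := by
  intro a b w
  induction w with
  | nil => intro h; rfl
  | @cons u v w h p ih =>
    intro hs
    have hu : u ∈ S := hs u (by simp [Walk.support_cons])
    have hv : v ∈ S := hs v (by simp [Walk.support_cons, p.start_mem_support])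
    have step : (G.induce S).Adj ⟨u, hu⟩ ⟨v, hv⟩ := h
    exact (step.reachable).trans (ih fun x hx => hs x (by simp [Walk.support_cons, hx]))

lemma connOn_iff_induce_connected {S : Set V} : ConnOn G S ↔ (G.induce S).Connected := by
  constructor
  · rintro ⟨hne, h⟩
    rw [connected_iff]
    refine ⟨fun a b => ?_, by
      obtain ⟨x, hx⟩ := hne; exact ⟨⟨x, hx⟩⟩⟩
    obtain ⟨w, hw⟩ := h a.1 a.2 b.1 b.2
    simpa using walk_induce_of_reach w hw
  · rintro h
    obtain ⟨a0⟩ := h.nonempty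
    have hpre := h.preconnected
    refine ⟨⟨a0.1, a0.2⟩, fun a ha b hb => ?_⟩
    obtain ⟨w⟩ := hpre ⟨a, ha⟩ ⟨b, hb⟩
    exact reach_of_walk_in_induce w

noncomputable def induceInduceIso (G : SimpleGraph V) (S : Set V) (t : Set S) :
    (G.induce S).induce t ≃g G.induce (Subtype.val '' t) where
  toEquiv := Equiv.Set.image Subtype.val t Subtype.val_injective
  map_rel_iff' := by
    intro a b
    simp [Equiv.Set.image, Equiv.Set.imageOfInjOn, comap_adj]

lemma image_compl_singleton (S : Set V) (v : S) :
    (Subtype.val '' ({v}ᶜ : Set S)) = S \ {v.1} := by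
  ext x
  simp only [Set.mem_image, Set.mem_compl_iff, Set.mem_singleton_iff, Set.mem_diff]
  constructor
  · rintro ⟨y, hy, rfl⟩
    exact ⟨y.2, fun h => hy (Subtype.ext h)⟩
  · rintro ⟨hx, hne⟩
    exact ⟨⟨x, hx⟩, fun h => hne (congrArg Subtype.val h), rfl⟩

lemma twoVC_iff_twoVCOn {S : Set V} : TwoVC (G.induce S) ↔ TwoVCOn G S := by
  unfold TwoVC TwoVCOn
  rw [Nat.card_coe_set_eq]
  constructor
  · rintro ⟨hcard, hconn⟩
    refine ⟨hcard, fun v hv => ?_⟩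
    rw [connOn_iff_induce_connected]
    have := (induceInduceIso G S ({(⟨v, hv⟩ : S)}ᶜ)).connected_iff.1 (hconn ⟨v, hv⟩)
    rwa [image_compl_singleton] at this
  · rintro ⟨hcard, hconn⟩
    refine ⟨hcard, fun v => ?_⟩
    rw [(induceInduceIso G S ({v}ᶜ)).connected_iff, image_compl_singleton]
    exact connOn_iff_induce_connected.1 (hconn v.1 v.2)

lemma ConnOn.insertVert {S : Set V} {u z : V} (h : ConnOn G S) (hu : u ∈ S) (hadj : G.Adj z u) :
    ConnOn G (insert z S) := by
  have hzu : ReachIn G (insert z S) z u :=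
    reachIn_of_adj hadj (Set.mem_insert _ _) (Set.mem_insert_of_mem _ hu)
  have key : ∀ a ∈ insert z S, ReachIn G (insert z S) a u := by
    intro a ha
    rcases Set.mem_insert_iff.1 ha with rfl | ha'
    · exact hzu
    · exact (h.2 a ha' u hu).mono (Set.subset_insert _ _)
  exact ⟨⟨z, Set.mem_insert _ _⟩, fun a ha b hb => (key a ha).trans (key b hb).symm⟩

/-- Attach the support of a walk ending in a connected set. -/
lemma ConnOn.attach {T : Set V} (h : ConnOn G T) {x t : V} (w : G.Walk x t) (ht : t ∈ T) :
    ConnOn G (T ∪ {z | z ∈ w.support}) := by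
  induction w with
  | @nil a =>
    have heq : T ∪ {z | z ∈ (Walk.nil : G.Walk a a).support} = T := by
      ext z
      simp only [Set.mem_union, Set.mem_setOf_eq, Walk.support_nil, List.mem_singleton]
      exact ⟨fun hz => hz.elim id (fun h' => h' ▸ ht), fun hz => Or.inl hz⟩
    rw [heq]; exact h
  | @cons u v t' hadj p ih =>
    have h2 := ih ht
    have h3 : ConnOn G (insert u (T ∪ {z | z ∈ p.support})) :=
      h2.insertVert (Or.inr p.start_mem_support) hadj
    have heq : insert u (T ∪ {z | z ∈ p.support})
        = T ∪ {z | z ∈ (Walk.cons hadj p).support} := by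
      ext z
      simp only [Set.mem_insert_iff, Set.mem_union, Set.mem_setOf_eq, Walk.support_cons,
        List.mem_cons]
      tauto
    rw [heq] at h3; exact h3

lemma ConnOn.ofWalk {a b : V} (w : G.Walk a b) : ConnOn G {z | z ∈ w.support} := by
  have key : ∀ x ∈ w.support, ReachIn G {z | z ∈ w.support} a x := by
    intro x hx
    induction w with
    | nil => simp at hx; subst hx; exact ReachIn.refl (by simp)
    | @cons u v t' hadj p ih =>
      rcases List.mem_cons.1 (by simpa [Walk.support_cons] using hx) with rfl | hx'
      · exact ReachIn.refl (by simp [Walk.support_cons])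
      · have step : ReachIn G {z | z ∈ (Walk.cons hadj p).support} u v :=
          reachIn_of_adj hadj (by simp [Walk.support_cons])
            (by simp [Walk.support_cons, p.start_mem_support])
        have : ReachIn G {z | z ∈ p.support} v x := ih hx'
        exact step.trans (this.mono (fun y hy => by simp [Walk.support_cons]; right; exact hy))
  exact ⟨⟨a, by simp [w.start_mem_support]⟩,
    fun x hx y hy => (key x hx).symm.trans (key y hy)⟩

private lemma crossing_aux {S P : Set V} : ∀ {a b : V} (w : G.Walk a b),
    (∀ z ∈ w.support, z ∈ S) → a ∈ P → b ∉ P →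
    ∃ u v, u ∈ S ∧ u ∈ P ∧ v ∈ S ∧ v ∉ P ∧ G.Adj u v := by
  intro a b w
  induction w with
  | nil => intro _ haP hbP; exact absurd haP hbP
  | @cons u v t' hadj p ih =>
    intro hw haP hbP
    by_cases hv : v ∈ P
    · exact ih (fun x hx => hw x (by simp [Walk.support_cons, hx])) hv hbP
    · exact ⟨u, v, hw u (by simp [Walk.support_cons]), haP,
        hw v (by simp [Walk.support_cons, p.start_mem_support]), hv, hadj⟩

/-- In a connected set, any split into a part and its complement has a crossing edge. -/
lemma crossing {S P : Set V} (h : ConnOn G S) {a b : V} (ha : a ∈ S) (hb : b ∈ S)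
    (haP : a ∈ P) (hbP : b ∉ P) :
    ∃ u v, u ∈ S ∧ u ∈ P ∧ v ∈ S ∧ v ∉ P ∧ G.Adj u v := by
  obtain ⟨w, hw⟩ := h.2 a ha b hb
  exact crossing_aux w hw haP hbP

/-- Extract an initial segment of a walk up to the first vertex in `A`. -/
lemma firstHit {A : Set V} : ∀ {x b : V} (w : G.Walk x b), b ∈ A →
    ∃ (a1 : V) (w1 : G.Walk x a1), a1 ∈ A ∧ (∀ z ∈ w1.support, z ∈ w.support) ∧
      (∀ z ∈ w1.support, z ≠ a1 → z ∉ A) := by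
  intro x b w hb
  induction w with
  | @nil a => exact ⟨a, Walk.nil, hb, by simp, by simp⟩
  | @cons u v t' hadj p ih =>
    by_cases hu : u ∈ A
    · exact ⟨u, Walk.nil, hu, by simp [Walk.support_cons], by simp⟩
    · obtain ⟨a1, w1, ha1, hsub, hout⟩ := ih hb
      refine ⟨a1, Walk.cons hadj w1, ha1, ?_, ?_⟩
      · intro z hz
        rcases List.mem_cons.1 (by simpa [Walk.support_cons] using hz) with rfl | hz'
        · simp [Walk.support_cons]
        · simp [Walk.support_cons]; right; exact hsub z hz'
      · intro z hz hzne
        rcases List.mem_cons.1 (by simpa [Walk.support_cons] using hz) with rfl | hz'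
        · exact hu
        · exact hout z hz' hzne

lemma TwoVCOn.finite [Fintype V] {S : Set V} (_h : TwoVCOn G S) : S.Finite := Set.toFinite _

lemma TwoVCOn.conn [Fintype V] {S : Set V} (h : TwoVCOn G S) : ConnOn G S := by
  obtain ⟨hcard, hconn⟩ := h
  have hne : S.Nonempty := by
    rw [← Set.ncard_pos (Set.toFinite S)]; omega
  obtain ⟨v, hv⟩ := hne
  refine ⟨⟨v, hv⟩, fun a ha b hb => ?_⟩
  -- pick r ∈ S \ {a, b}
  have : ∃ r ∈ S, r ≠ a ∧ r ≠ b := by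
    by_contra hcon
    push_neg at hcon
    have hsub : S ⊆ {a, b} := fun x hx => by
      rcases eq_or_ne x a with rfl | hxa
      · exact Set.mem_insert _ _
      · right; exact (hcon x hx hxa)
    have := Set.ncard_le_ncard hsub (Set.toFinite _)
    have h2 : ({a, b} : Set V).ncard ≤ 2 := Set.ncard_insert_le _ _ |>.trans (by simp)
    omega
  obtain ⟨r, hr, hra, hrb⟩ := this
  exact ((hconn r hr).2 a ⟨ha, hra.symm⟩ b ⟨hb, hrb.symm⟩).mono Set.diff_subset

/-- Every vertex of a 2-connected set has two distinct neighbours inside the set. -/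
lemma TwoVCOn.two_nbrs [Fintype V] {S : Set V} (h : TwoVCOn G S) {v : V} (hv : v ∈ S) :
    ∃ a b, a ∈ S ∧ b ∈ S ∧ G.Adj v a ∧ G.Adj v b ∧ a ≠ b := by
  obtain ⟨hcard, hconn⟩ := h
  have hex : ∀ (t : V), t ∈ S → t ≠ v → ∀ (r : V), r ∈ S → r ≠ v → r ≠ t →
      ∃ a, a ∈ S ∧ a ≠ r ∧ G.Adj v a := by
    intro t ht htv r hr hrv hrt
    obtain ⟨w, hw⟩ := (hconn r hr).2 v ⟨hv, hrv.symm⟩ t ⟨ht, hrt.symm⟩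
    have hvt : v ≠ t := htv.symm
    cases w with
    | nil => exact absurd rfl hvt
    | @cons u x t' hadj p =>
      refine ⟨x, ?_, ?_, hadj⟩
      · exact (hw x (by simp [Walk.support_cons, p.start_mem_support])).1
      · exact fun hxr => ((hw x (by simp [Walk.support_cons, p.start_mem_support])).2
          (by simpa using hxr)).elim
  -- first pick two elements of S distinct from v
  have h3 : ∃ t r, t ∈ S ∧ r ∈ S ∧ t ≠ v ∧ r ≠ v ∧ t ≠ r := by
    by_contra hcon
    push_neg at hcon
    have hsub : ∀ x ∈ S, ∀ y ∈ S, x ≠ v → y ≠ v → x = y := by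
      intro x hx y hy hxv hyv
      by_contra hxy
      exact hxy (hcon x y hx hy hxv hyv)
    by_cases hem : ∃ x ∈ S, x ≠ v
    · obtain ⟨x, hx, hxv⟩ := hem
      have : S ⊆ {v, x} := fun y hy => by
        rcases eq_or_ne y v with rfl | hyv
        · exact Set.mem_insert _ _
        · right; exact (hsub y hy x hx hyv hxv)
      have := Set.ncard_le_ncard this (Set.toFinite _)
      have h2 : ({v, x} : Set V).ncard ≤ 2 := Set.ncard_insert_le _ _ |>.trans (by simp)
      omega
    · push_neg at hem
      have : S ⊆ {v} := fun y hy => hem y hy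
      have := Set.ncard_le_ncard this (Set.toFinite _)
      rw [Set.ncard_singleton] at this
      omega
  obtain ⟨t, r, ht, hr, htv, hrv, htr⟩ := h3
  obtain ⟨a, ha, har, hva⟩ := hex t ht htv r hr hrv (Ne.symm htr)
  -- second: remove a, find neighbour ≠ a
  have hav : a ≠ v := fun h' => (G.loopless.irrefl v (h' ▸ hva)).elim
  -- pick target distinct from v and a
  have h4 : ∃ t2, t2 ∈ S ∧ t2 ≠ v ∧ t2 ≠ a := by
    rcases eq_or_ne t a with rfl | hta
    · exact ⟨r, hr, hrv, fun h' => har (h'.symm ▸ rfl) |>.elim ⟩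
    · exact ⟨t, ht, htv, hta⟩
  obtain ⟨t2, ht2, ht2v, ht2a⟩ := h4
  obtain ⟨w, hw⟩ := (hconn a ha).2 v ⟨hv, hav.symm⟩ t2 ⟨ht2, ht2a⟩
  cases w with
  | nil => exact absurd rfl ht2v.symm
  | @cons u x t' hadj p =>
    refine ⟨a, x, ha, (hw x (by simp [Walk.support_cons, p.start_mem_support])).1, hva, hadj, ?_⟩
    intro hax
    exact (hw x (by simp [Walk.support_cons, p.start_mem_support])).2 (by simp [← hax])

lemma endNotInTake [DecidableEq V] {a b : V} {p : G.Walk a b} (hp : p.IsPath) {z : V}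
    (hz : z ∈ p.support) (hzb : z ≠ b) : b ∉ (p.takeUntil z hz).support := by
  intro hb
  have hspec := p.take_spec hz
  have hnodup : p.support.Nodup := hp.support_nodup
  rw [← hspec, Walk.support_append] at hnodup
  have hbd : b ∈ (p.dropUntil z hz).support.tail := by
    have hbdrop : b ∈ (p.dropUntil z hz).support := Walk.end_mem_support _
    rw [Walk.support_eq_cons] at hbdrop
    rcases List.mem_cons.1 hbdrop with rfl | h
    · exact absurd rfl hzb
    · exact h
  exact (List.disjoint_of_nodup_append hnodup) hb hbd

lemma takeUntil_support_subset [DecidableEq V] {a b : V} (p : G.Walk a b) {z : V}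
    (hz : z ∈ p.support) : ∀ x ∈ (p.takeUntil z hz).support, x ∈ p.support :=
  fun x hx => Walk.support_takeUntil_subset _ _ hx

lemma mem_support_iff_take_or_drop [DecidableEq V] {a b : V} (p : G.Walk a b) {z : V}
    (hz : z ∈ p.support) (x : V) :
    x ∈ p.support ↔ x ∈ (p.takeUntil z hz).support ∨ x ∈ (p.dropUntil z hz).support := by
  constructor
  · intro hx
    rw [← p.take_spec hz] at hx
    exact (Walk.mem_support_append_iff _ _).1 hx
  · rintro (h | h)
    · exact Walk.support_takeUntil_subset _ _ h
    · exact Walk.support_dropUntil_subset _ _ h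

lemma disjoint_take_drop_tail [DecidableEq V] {a b : V} {p : G.Walk a b} (hp : p.IsPath) {z : V}
    (hz : z ∈ p.support) :
    ∀ x ∈ (p.takeUntil z hz).support, x ∈ (p.dropUntil z hz).support → x = z := by
  intro x hxt hxd
  have hnodup : p.support.Nodup := hp.support_nodup
  rw [← p.take_spec hz, Walk.support_append] at hnodup
  by_contra hxz
  have : x ∈ (p.dropUntil z hz).support.tail := by
    rw [Walk.support_eq_cons] at hxd
    rcases List.mem_cons.1 hxd with rfl | h
    · exact absurd rfl hxz
    · exact h
  exact (List.disjoint_of_nodup_append hnodup) hxt this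

lemma ear [Fintype V] {A : Set V} (hA : TwoVCOn G A) {a0 a1 : V} (p : G.Walk a0 a1)
    (hp : p.IsPath) (h01 : a0 ≠ a1) (ha0 : a0 ∈ A) (ha1 : a1 ∈ A)
    (hsup : ∀ x ∈ p.support, x ∈ A → x = a0 ∨ x = a1) :
    TwoVCOn G (A ∪ {x | x ∈ p.support}) := by
  classical
  constructor
  · exact lt_of_lt_of_le hA.1 (Set.ncard_le_ncard Set.subset_union_left (Set.toFinite _))
  intro v hv
  by_cases hvp : v ∈ p.support
  · by_cases hvA : v ∈ A
    · rcases hsup v hvp hvA with rfl | rfl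
      · -- v = a0
        obtain ⟨x, h, q, rfl⟩ := Walk.exists_eq_cons_of_ne h01 p
        have hq : v ∉ q.support := ((Walk.cons_isPath_iff h q).1 hp).2
        have hconn := (hA.2 v hvA).attach q (t := a1) ⟨ha1, by simp [h01.symm]⟩
        have heq : (A ∪ {y | y ∈ (Walk.cons h q).support}) \ {v}
            = (A \ {v}) ∪ {y | y ∈ q.support} := by
          ext y
          simp only [Set.mem_diff, Set.mem_union, Set.mem_setOf_eq, Walk.support_cons,
            List.mem_cons, Set.mem_singleton_iff]
          constructor
          · rintro ⟨hy1 | hy1, hy2⟩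
            · exact Or.inl ⟨hy1, hy2⟩
            · rcases hy1 with rfl | hy1
              · exact absurd rfl hy2
              · exact Or.inr hy1
          · rintro (⟨hy1, hy2⟩ | hy1)
            · exact ⟨Or.inl hy1, hy2⟩
            · exact ⟨Or.inr (Or.inr hy1), fun hcon => hq (hcon ▸ hy1)⟩
        rw [heq]; exact hconn
      · -- v = a1
        obtain ⟨x, h, q, hrev⟩ := Walk.exists_eq_cons_of_ne h01.symm p.reverse
        have hqpath : p.reverse.IsPath := hp.reverse
        rw [hrev] at hqpath
        have hq : v ∉ q.support := ((Walk.cons_isPath_iff h q).1 hqpath).2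
        have hconn := (hA.2 v hvA).attach q (t := a0) ⟨ha0, by simp [h01]⟩
        have hmem : ∀ y, y ∈ p.support ↔ (y = v ∨ y ∈ q.support) := by
          intro y
          rw [← List.mem_reverse, ← Walk.support_reverse, hrev, Walk.support_cons]
          exact List.mem_cons
        have heq : (A ∪ {y | y ∈ p.support}) \ {v}
            = (A \ {v}) ∪ {y | y ∈ q.support} := by
          ext y
          simp only [Set.mem_diff, Set.mem_union, Set.mem_setOf_eq, Set.mem_singleton_iff]
          rw [hmem y]
          constructor
          · rintro ⟨hy1 | hy1, hy2⟩
            · exact Or.inl ⟨hy1, hy2⟩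
            · rcases hy1 with rfl | hy1
              · exact absurd rfl hy2
              · exact Or.inr hy1
          · rintro (⟨hy1, hy2⟩ | hy1)
            · exact ⟨Or.inl hy1, hy2⟩
            · exact ⟨Or.inr (Or.inr hy1), fun hcon => hq (hcon ▸ hy1)⟩
        rw [heq]; exact hconn
    · -- v interior
      have hva0 : v ≠ a0 := fun h => hvA (h ▸ ha0)
      have hva1 : v ≠ a1 := fun h => hvA (h ▸ ha1)
      have hqpath : (p.takeUntil v hvp).IsPath := hp.takeUntil hvp
      have hrpath : (p.dropUntil v hvp).IsPath := hp.dropUntil hvp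
      obtain ⟨u, hu, q2, hq2⟩ := Walk.exists_eq_cons_of_ne hva0 (p.takeUntil v hvp).reverse
      obtain ⟨w, hw, r2, hr2⟩ := Walk.exists_eq_cons_of_ne hva1 (p.dropUntil v hvp)
      have hqrevpath := hqpath.reverse
      rw [hq2] at hqrevpath
      have hvq2 : v ∉ q2.support := ((Walk.cons_isPath_iff hu q2).1 hqrevpath).2
      have hvr2 : v ∉ r2.support := by
        rw [hr2] at hrpath
        exact ((Walk.cons_isPath_iff hw r2).1 hrpath).2
      have hmemq : ∀ y, y ∈ (p.takeUntil v hvp).support ↔ (y = v ∨ y ∈ q2.support) := by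
        intro y
        rw [← List.mem_reverse, ← Walk.support_reverse, hq2, Walk.support_cons]
        exact List.mem_cons
      have hmemr : ∀ y, y ∈ (p.dropUntil v hvp).support ↔ (y = v ∨ y ∈ r2.support) := by
        intro y
        rw [hr2, Walk.support_cons]
        exact List.mem_cons
      have step1 : ConnOn G (A ∪ {y | y ∈ q2.support}) := hA.conn.attach q2 ha0
      have step2 : ConnOn G ((A ∪ {y | y ∈ q2.support}) ∪ {y | y ∈ r2.support}) :=
        step1.attach r2 (Or.inl ha1)
      have heq : (A ∪ {y | y ∈ p.support}) \ {v}
          = (A ∪ {y | y ∈ q2.support}) ∪ {y | y ∈ r2.support} := by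
        ext y
        simp only [Set.mem_diff, Set.mem_union, Set.mem_setOf_eq, Set.mem_singleton_iff]
        constructor
        · rintro ⟨hy1 | hy1, hy2⟩
          · exact Or.inl (Or.inl hy1)
          · rcases (mem_support_iff_take_or_drop p hvp y).1 hy1 with hy | hy
            · rcases (hmemq y).1 hy with h' | h'
              · exact absurd h' hy2
              · exact Or.inl (Or.inr h')
            · rcases (hmemr y).1 hy with h' | h'
              · exact absurd h' hy2
              · exact Or.inr h'
        · intro hy
          rcases hy with hy | hy
          · rcases hy with hy | hy
            · exact ⟨Or.inl hy, fun hcon => hvA (hcon ▸ hy)⟩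
            · refine ⟨Or.inr ?_, fun hcon => hvq2 (hcon ▸ hy)⟩
              exact (mem_support_iff_take_or_drop p hvp y).2 (Or.inl ((hmemq y).2 (Or.inr hy)))
          · refine ⟨Or.inr ?_, fun hcon => hvr2 (hcon ▸ hy)⟩
            exact (mem_support_iff_take_or_drop p hvp y).2 (Or.inr ((hmemr y).2 (Or.inr hy)))
      rw [heq]; exact step2
  · -- v ∈ A, v ∉ supp p
    have hvA : v ∈ A := hv.resolve_right hvp
    have hconn := (hA.2 v hvA).attach p (t := a1) ⟨ha1, fun h => hvp (h ▸ p.end_mem_support)⟩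
    have heq : (A ∪ {y | y ∈ p.support}) \ {v} = (A \ {v}) ∪ {y | y ∈ p.support} := by
      ext y
      simp only [Set.mem_diff, Set.mem_union, Set.mem_setOf_eq, Set.mem_singleton_iff]
      constructor
      · rintro ⟨hy1 | hy1, hy2⟩
        · exact Or.inl ⟨hy1, hy2⟩
        · exact Or.inr hy1
      · rintro (⟨hy1, hy2⟩ | hy1)
        · exact ⟨Or.inl hy1, hy2⟩
        · exact ⟨Or.inr hy1, fun hcon => hvp (hcon ▸ hy1)⟩
    rw [heq]; exact hconn

lemma path_loop_support {a : V} {q : G.Walk a a} (hq : q.IsPath) : ∀ x ∈ q.support, x = a := by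
  cases q with
  | nil => simp
  | cons h q' => exact absurd q'.end_mem_support ((Walk.cons_isPath_iff _ _).1 hq).2

lemma struct [Fintype V] {C Y : Set V} (hC : TwoVCOn G C) (hA : TwoVCOn G (C \ Y))
    (hYC : Y ⊆ C) (hY2 : ∃ u ∈ Y, ∃ w ∈ Y, u ≠ w)
    (hmin : ∀ S : Set V, S ⊆ Y → S.Nonempty → S ≠ Y → ¬ TwoVCOn G ((C \ Y) ∪ S)) :
    ConnOn G Y ∧ ∀ y ∈ Y, ∃ u w : V, u ≠ w ∧ (G.neighborSet y ∩ C) = {u, w} := by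
  classical
  set A := C \ Y with hAdef
  have hYA : ∀ x ∈ Y, x ∉ A := fun x hx hxA => hxA.2 hx
  have hAC : A ⊆ C := Set.diff_subset
  have hCA : ∀ x ∈ C, x ∉ A → x ∈ Y := by
    intro x hx hxA
    by_contra hxY
    exact hxA ⟨hx, hxY⟩
  -- find crossing edge a0 - y1
  have hAne : A.Nonempty := by
    rw [← Set.ncard_pos (Set.toFinite A)]; have := hA.1; omega
  obtain ⟨ax, hax⟩ := hAne
  obtain ⟨yx, hyx, _, _, _⟩ := id hY2
  obtain ⟨a0, y1, _, ha0A, hy1C, hy1nA, hadj01⟩ :=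
    crossing hC.conn (hAC hax) (hYC hyx) hax (hYA yx hyx)
  have hy1Y : y1 ∈ Y := hCA y1 hy1C hy1nA
  -- a target in A distinct from a0
  obtain ⟨a1', ha1', ha1'ne⟩ := Set.exists_ne_of_one_lt_ncard (s := A) (by have := hA.1; omega) a0
  -- reach within C \ {a0}
  have hy1ne : y1 ≠ a0 := fun h => hy1nA (h ▸ ha0A)
  obtain ⟨w0, hw0⟩ := (hC.2 a0 (hAC ha0A)).2 y1 ⟨hy1C, hy1ne⟩ a1' ⟨hAC ha1', ha1'ne⟩
  obtain ⟨a1, w1, ha1A, hw1sub, hw1out⟩ := firstHit w0 ha1'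
  have hw1'path := w1.bypass_isPath
  have hw1'sub : ∀ x ∈ w1.bypass.support, x ∈ w1.support :=
    fun x hx => w1.support_bypass_subset hx
  have ha0nw1' : a0 ∉ w1.bypass.support := by
    intro h
    exact ((hw0 a0 (hw1sub a0 (hw1'sub a0 h))).2 rfl)
  set p := Walk.cons hadj01 w1.bypass with hpdef
  have hppath : p.IsPath := (Walk.cons_isPath_iff _ _).2 ⟨hw1'path, ha0nw1'⟩
  have h01 : a0 ≠ a1 := by
    intro h
    exact (hw0 a1 (hw1sub a1 w1.end_mem_support)).2 h.symm
  have hsuppC : ∀ x ∈ p.support, x ∈ C := by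
    intro x hx
    rw [hpdef, Walk.support_cons] at hx
    rcases List.mem_cons.1 hx with rfl | hx'
    · exact hAC ha0A
    · exact (hw0 x (hw1sub x (hw1'sub x hx'))).1
  have hsup : ∀ x ∈ p.support, x ∈ A → x = a0 ∨ x = a1 := by
    intro x hx hxA
    rw [hpdef, Walk.support_cons] at hx
    rcases List.mem_cons.1 hx with rfl | hx'
    · exact Or.inl rfl
    · by_contra hcon
      push_neg at hcon
      exact hw1out x (hw1'sub x hx') hcon.2 hxA
  have hEar := ear hA p hppath h01 ha0A ha1A hsup
  -- minimality forces Y = interior of p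
  have hY : Y = {x | x ∈ p.support} \ A := by
    by_contra hne
    refine hmin ({x | x ∈ p.support} \ A) (fun x hx => hCA x (hsuppC x hx.1) hx.2)
      ⟨y1, by rw [Set.mem_setOf_eq, hpdef, Walk.support_cons]; exact List.mem_cons_of_mem _ w1.bypass.start_mem_support, hy1nA⟩
      (fun h => hne h.symm) ?_
    have : A ∪ ({x | x ∈ p.support} \ A) = A ∪ {x | x ∈ p.support} := by
      ext x
      simp only [Set.mem_union, Set.mem_diff, Set.mem_setOf_eq]
      by_cases hxA : x ∈ A <;> tauto
    rw [this]
    exact hEar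
  -- interior membership characterization
  have hYiff : ∀ x, x ∈ Y ↔ (x ∈ p.support ∧ x ≠ a0 ∧ x ≠ a1) := by
    intro x
    rw [hY]
    simp only [Set.mem_diff, Set.mem_setOf_eq]
    constructor
    · rintro ⟨hx1, hx2⟩
      exact ⟨hx1, fun h => hx2 (h ▸ ha0A), fun h => hx2 (h ▸ ha1A)⟩
    · rintro ⟨hx1, hx2, hx3⟩
      refine ⟨hx1, fun hxA => ?_⟩
      rcases hsup x hx1 hxA with h | h
      · exact hx2 h
      · exact hx3 h
  -- Part 1 : ConnOn G Y
  have hy1a1 : y1 ≠ a1 := fun h => hy1nA (h ▸ ha1A)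
  obtain ⟨t, ht, w2, hw2⟩ := Walk.exists_eq_cons_of_ne (Ne.symm hy1a1) w1.bypass.reverse
  have hw2path : w1.bypass.reverse.IsPath := hw1'path.reverse
  rw [hw2] at hw2path
  have ha1nw2 : a1 ∉ w2.support := ((Walk.cons_isPath_iff _ _).1 hw2path).2
  have hmemw1' : ∀ x, x ∈ w1.bypass.support ↔ (x = a1 ∨ x ∈ w2.support) := by
    intro x
    rw [← List.mem_reverse, ← Walk.support_reverse, hw2, Walk.support_cons]
    exact List.mem_cons
  have hYw2 : Y = {x | x ∈ w2.support} := by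
    ext x
    rw [hYiff x, Set.mem_setOf_eq]
    constructor
    · rintro ⟨hx1, hx2, hx3⟩
      rw [hpdef, Walk.support_cons] at hx1
      rcases List.mem_cons.1 hx1 with rfl | hx'
      · exact absurd rfl hx2
      · rcases (hmemw1' x).1 hx' with rfl | h
        · exact absurd rfl hx3
        · exact h
    · intro hx
      have hxw1' : x ∈ w1.bypass.support := (hmemw1' x).2 (Or.inr hx)
      refine ⟨by rw [hpdef, Walk.support_cons]; exact List.mem_cons_of_mem _ hxw1', ?_, ?_⟩
      · exact fun h => ha0nw1' (h ▸ hxw1')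
      · exact fun h => ha1nw2 (h ▸ hx)
  have hConnY : ConnOn G Y := by
    rw [hYw2]; exact ConnOn.ofWalk w2
  refine ⟨hConnY, ?_⟩
  intro y hy
  obtain ⟨hyp, hya0, hya1⟩ := (hYiff y).1 hy
  have hqpath : (p.takeUntil y hyp).IsPath := hppath.takeUntil hyp
  have hrpath : (p.dropUntil y hyp).IsPath := hppath.dropUntil hyp
  obtain ⟨u, hu, q2, hq2⟩ := Walk.exists_eq_cons_of_ne hya0 (p.takeUntil y hyp).reverse
  obtain ⟨w, hwadj, r2, hr2⟩ := Walk.exists_eq_cons_of_ne hya1 (p.dropUntil y hyp)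
  have hqrev := hqpath.reverse
  rw [hq2] at hqrev
  have hynq2 : y ∉ q2.support := ((Walk.cons_isPath_iff _ _).1 hqrev).2
  have hq2path : q2.IsPath := ((Walk.cons_isPath_iff _ _).1 hqrev).1
  have hrcons := hrpath
  rw [hr2] at hrcons
  have hynr2 : y ∉ r2.support := ((Walk.cons_isPath_iff _ _).1 hrcons).2
  have hr2path : r2.IsPath := ((Walk.cons_isPath_iff _ _).1 hrcons).1
  have hmemq : ∀ x, x ∈ (p.takeUntil y hyp).support ↔ (x = y ∨ x ∈ q2.support) := by
    intro x
    rw [← List.mem_reverse, ← Walk.support_reverse, hq2, Walk.support_cons]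
    exact List.mem_cons
  have hmemr : ∀ x, x ∈ (p.dropUntil y hyp).support ↔ (x = y ∨ x ∈ r2.support) := by
    intro x
    rw [hr2, Walk.support_cons]
    exact List.mem_cons
  have hdisj := disjoint_take_drop_tail hppath hyp
  have ha1ntake : a1 ∉ (p.takeUntil y hyp).support := endNotInTake hppath hyp hya1
  have ha0ndrop : a0 ∉ (p.dropUntil y hyp).support := by
    intro h
    exact hya0 (hdisj a0 (Walk.start_mem_support _) h).symm
  have htakesub : ∀ x ∈ (p.takeUntil y hyp).support, x ∈ p.support :=
    fun x hx => Walk.support_takeUntil_subset _ _ hx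
  have hdropsub : ∀ x ∈ (p.dropUntil y hyp).support, x ∈ p.support :=
    fun x hx => Walk.support_dropUntil_subset _ _ hx
  have hq2sub : ∀ x ∈ q2.support, x ∈ (p.takeUntil y hyp).support :=
    fun x hx => (hmemq x).2 (Or.inr hx)
  have hr2sub : ∀ x ∈ r2.support, x ∈ (p.dropUntil y hyp).support :=
    fun x hx => (hmemr x).2 (Or.inr hx)
  have huq : u ∈ (p.takeUntil y hyp).support := hq2sub u q2.start_mem_support
  have hwr : w ∈ (p.dropUntil y hyp).support := hr2sub w r2.start_mem_support
  have huy : u ≠ y := fun h => hynq2 (h ▸ q2.start_mem_support)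
  have hwy : w ≠ y := fun h => hynr2 (h ▸ r2.start_mem_support)
  have huw : u ≠ w := fun h => huy (hdisj u huq (h ▸ hwr))
  have huC : u ∈ C := hsuppC u (htakesub u huq)
  have hwC : w ∈ C := hsuppC w (hdropsub w hwr)
  have hua1 : u ≠ a1 := fun h => ha1ntake (h ▸ huq)
  have hwa0 : w ≠ a0 := fun h => ha0ndrop (h ▸ hwr)
  have htakeA : ∀ x ∈ (p.takeUntil y hyp).support, x ∈ A → x = a0 := by
    intro x hx hxA
    rcases hsup x (htakesub x hx) hxA with h | h
    · exact h
    · exact absurd (h ▸ hx) ha1ntake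
  have hdropA : ∀ x ∈ (p.dropUntil y hyp).support, x ∈ A → x = a1 := by
    intro x hx hxA
    rcases hsup x (hdropsub x hx) hxA with h | h
    · exact absurd (h ▸ hx) ha0ndrop
    · exact h
  have hynA : y ∉ A := hYA y hy
  -- the generic minimality contradiction
  have hShrink : ∀ {b0 b1 : V} (E : G.Walk b0 b1), E.IsPath → b0 ≠ b1 → b0 ∈ A → b1 ∈ A →
      (∀ x ∈ E.support, x ∈ A → x = b0 ∨ x = b1) → (∀ x ∈ E.support, x ∈ C) →
      y ∈ E.support → (∃ yy, yy ∈ Y ∧ yy ∉ E.support) → False := by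
    rintro b0 b1 E hEpath hb01 hb0 hb1 hEsup hEC hyE ⟨yy, hyyY, hyyE⟩
    have hEar2 := ear hA E hEpath hb01 hb0 hb1 hEsup
    refine hmin ({x | x ∈ E.support} \ A) (fun x hx => hCA x (hEC x hx.1) hx.2)
      ⟨y, hyE, hynA⟩ (fun h => hyyE (h ▸ hyyY : yy ∈ ({x | x ∈ E.support} \ A)).1) ?_
    have hun : A ∪ ({x | x ∈ E.support} \ A) = A ∪ {x | x ∈ E.support} := by
      ext x
      simp only [Set.mem_union, Set.mem_diff, Set.mem_setOf_eq]
      by_cases hxA : x ∈ A <;> tauto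
    rw [hun]
    exact hEar2
  refine ⟨u, w, huw, ?_⟩
  ext z
  simp only [Set.mem_inter_iff, mem_neighborSet, Set.mem_insert_iff, Set.mem_singleton_iff]
  constructor
  · rintro ⟨hzadj, hzC⟩
    by_contra hcon
    push_neg at hcon
    obtain ⟨hzu, hzw⟩ := hcon
    exfalso
    have hzy : z ≠ y := fun h => (G.irrefl (h ▸ hzadj.symm))
    by_cases hzA : z ∈ A
    · -- extra edge into A
      -- EL : ear from z to a0 through the take part
      have hEL : z ≠ a0 → w ≠ a1 → False := by
        intro hza0 hwa1
        have hzntake : z ∉ (p.takeUntil y hyp).support := fun h => hza0 (htakeA z h hzA)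
        set EL := Walk.cons hzadj.symm (p.takeUntil y hyp).reverse with hELdef
        have hELmem : ∀ x, x ∈ EL.support ↔ (x = z ∨ x ∈ (p.takeUntil y hyp).support) := by
          intro x
          rw [hELdef, Walk.support_cons]
          constructor
          · intro hx
            rcases List.mem_cons.1 hx with rfl | hx'
            · exact Or.inl rfl
            · right; rwa [Walk.support_reverse, List.mem_reverse] at hx'
          · intro hx
            rcases hx with rfl | hx'
            · exact List.mem_cons_self
            · exact List.mem_cons_of_mem _ (by rwa [Walk.support_reverse, List.mem_reverse])
        have hELpath : EL.IsPath := (Walk.cons_isPath_iff _ _).2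
          ⟨hqpath.reverse, by rw [Walk.support_reverse, List.mem_reverse]; exact hzntake⟩
        refine hShrink EL hELpath hza0 hzA ha0A ?_ ?_ ?_ ⟨w, ?_, ?_⟩
        · intro x hx hxA
          rcases (hELmem x).1 hx with rfl | hx'
          · exact Or.inl rfl
          · exact Or.inr (htakeA x hx' hxA)
        · intro x hx
          rcases (hELmem x).1 hx with rfl | hx'
          · exact hAC hzA
          · exact hsuppC x (htakesub x hx')
        · exact (hELmem y).2 (Or.inr (Walk.end_mem_support _))
        · exact (hYiff w).2 ⟨hdropsub w hwr, hwa0, hwa1⟩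
        · intro hwEL
          rcases (hELmem w).1 hwEL with h | h
          · exact hzw h.symm
          · exact hwy (hdisj w h hwr)
      have hER : z ≠ a1 → u ≠ a0 → False := by
        intro hza1 hua0
        have hzndrop : z ∉ (p.dropUntil y hyp).support := fun h => hza1 (hdropA z h hzA)
        set ER := Walk.cons hzadj.symm (p.dropUntil y hyp) with hERdef
        have hERmem : ∀ x, x ∈ ER.support ↔ (x = z ∨ x ∈ (p.dropUntil y hyp).support) := by
          intro x
          rw [hERdef, Walk.support_cons]
          exact List.mem_cons
        have hERpath : ER.IsPath := (Walk.cons_isPath_iff _ _).2 ⟨hrpath, hzndrop⟩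
        refine hShrink ER hERpath hza1 hzA ha1A ?_ ?_ ?_ ⟨u, ?_, ?_⟩
        · intro x hx hxA
          rcases (hERmem x).1 hx with rfl | hx'
          · exact Or.inl rfl
          · exact Or.inr (hdropA x hx' hxA)
        · intro x hx
          rcases (hERmem x).1 hx with rfl | hx'
          · exact hAC hzA
          · exact hsuppC x (hdropsub x hx')
        · exact (hERmem y).2 (Or.inr (Walk.start_mem_support _))
        · exact (hYiff u).2 ⟨htakesub u huq, hua0, hua1⟩
        · intro huER
          rcases (hERmem u).1 huER with h | h
          · exact hzu h.symm
          · exact huy (hdisj u huq h)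
      by_cases hza1 : z = a1
      · exact hEL (fun h => h01 (h.symm.trans hza1)) (fun h => hzw (hza1.trans h.symm))
      · by_cases hua0 : u = a0
        · by_cases hwa1 : w = a1
          · -- Y = {y}, contradicting hY2
            subst hua0
            subst hwa1
            have hsingle : ∀ x ∈ Y, x = y := by
              intro x hx
              obtain ⟨hx1, hx2, hx3⟩ := (hYiff x).1 hx
              rcases (mem_support_iff_take_or_drop p hyp x).1 hx1 with hxq | hxr
              · rcases (hmemq x).1 hxq with h | h
                · exact h
                · exact absurd (path_loop_support hq2path x h) hx2
              · rcases (hmemr x).1 hxr with h | h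
                · exact h
                · exact absurd (path_loop_support hr2path x h) hx3
            obtain ⟨c1, hc1, c2, hc2, hcne⟩ := hY2
            exact hcne ((hsingle c1 hc1).trans (hsingle c2 hc2).symm)
          · exact hEL (fun h => hzu (h.trans hua0.symm)) hwa1
        · exact hER hza1 hua0
    · -- chord into the interior
      have hzY : z ∈ Y := hCA z hzC hzA
      have hzp : z ∈ p.support := ((hYiff z).1 hzY).1
      rcases (mem_support_iff_take_or_drop p hyp z).1 hzp with hzq | hzr
      · -- z in the take part
        have hzq2 : z ∈ q2.support := by
          rcases (hmemq z).1 hzq with h | h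
          · exact absurd h hzy
          · exact h
        have hq2revpath : q2.reverse.IsPath := hq2path.reverse
        have hz' : z ∈ q2.reverse.support := by
          rw [Walk.support_reverse, List.mem_reverse]; exact hzq2
        have hunT : u ∉ (q2.reverse.takeUntil z hz').support := endNotInTake hq2revpath hz' hzu
        have hTsub : ∀ x ∈ (q2.reverse.takeUntil z hz').support, x ∈ q2.support := by
          intro x hx
          have := Walk.support_takeUntil_subset _ hz' hx
          rwa [Walk.support_reverse, List.mem_reverse] at this
        have hTpath : (q2.reverse.takeUntil z hz').IsPath := hq2revpath.takeUntil hz'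
        set E := (q2.reverse.takeUntil z hz').append
          (Walk.cons hzadj.symm (p.dropUntil y hyp)) with hEdef
        have hEsupp : E.support = (q2.reverse.takeUntil z hz').support
            ++ (p.dropUntil y hyp).support := by
          rw [hEdef, Walk.support_append, Walk.support_cons, List.tail_cons]
        have hEmem : ∀ x, x ∈ E.support ↔
            (x ∈ (q2.reverse.takeUntil z hz').support ∨ x ∈ (p.dropUntil y hyp).support) := by
          intro x; rw [hEsupp]; exact List.mem_append
        have hTdisj : ∀ x ∈ (q2.reverse.takeUntil z hz').support,
            x ∈ (p.dropUntil y hyp).support → False := by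
          intro x hx hx'
          have hxy := hdisj x (hq2sub x (hTsub x hx)) hx'
          exact hynq2 (hxy ▸ (hTsub x hx))
        have hEpath : E.IsPath := by
          rw [Walk.isPath_def, hEsupp]
          exact List.Nodup.append hTpath.support_nodup hrpath.support_nodup hTdisj
        have hua0 : u ≠ a0 := by
          intro h
          subst h
          exact hzA (path_loop_support hq2path z hzq2 ▸ ha0A)
        refine hShrink E hEpath h01 ha0A ha1A ?_ ?_ ?_ ⟨u, ?_, ?_⟩
        · intro x hx hxA
          rcases (hEmem x).1 hx with hx' | hx'
          · exact Or.inl (htakeA x (hq2sub x (hTsub x hx')) hxA)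
          · exact Or.inr (hdropA x hx' hxA)
        · intro x hx
          rcases (hEmem x).1 hx with hx' | hx'
          · exact hsuppC x (htakesub x (hq2sub x (hTsub x hx')))
          · exact hsuppC x (hdropsub x hx')
        · exact (hEmem y).2 (Or.inr (Walk.start_mem_support _))
        · exact (hYiff u).2 ⟨htakesub u huq, hua0, hua1⟩
        · intro huE
          rcases (hEmem u).1 huE with h | h
          · exact hunT h
          · exact huy (hdisj u huq h)
      · -- z in the drop part
        have hzr2 : z ∈ r2.support := by
          rcases (hmemr z).1 hzr with h | h
          · exact absurd h hzy
          · exact h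
        have hr2revpath : r2.reverse.IsPath := hr2path.reverse
        have hz' : z ∈ r2.reverse.support := by
          rw [Walk.support_reverse, List.mem_reverse]; exact hzr2
        have hwnT : w ∉ (r2.reverse.takeUntil z hz').support := endNotInTake hr2revpath hz' hzw
        have hTsub : ∀ x ∈ (r2.reverse.takeUntil z hz').support, x ∈ r2.support := by
          intro x hx
          have := Walk.support_takeUntil_subset _ hz' hx
          rwa [Walk.support_reverse, List.mem_reverse] at this
        have hTpath : (r2.reverse.takeUntil z hz').IsPath := hr2revpath.takeUntil hz'
        set E := (r2.reverse.takeUntil z hz').append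
          (Walk.cons hzadj.symm (p.takeUntil y hyp).reverse) with hEdef
        have hEsupp : E.support = (r2.reverse.takeUntil z hz').support
            ++ (p.takeUntil y hyp).reverse.support := by
          rw [hEdef, Walk.support_append, Walk.support_cons, List.tail_cons]
        have hEmem : ∀ x, x ∈ E.support ↔
            (x ∈ (r2.reverse.takeUntil z hz').support ∨ x ∈ (p.takeUntil y hyp).support) := by
          intro x
          rw [hEsupp]
          exact List.mem_append.trans (by rw [Walk.support_reverse, List.mem_reverse])
        have hTdisj : ∀ x ∈ (r2.reverse.takeUntil z hz').support,
            x ∈ (p.takeUntil y hyp).reverse.support → False := by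
          intro x hx hx'
          rw [Walk.support_reverse, List.mem_reverse] at hx'
          have hxy := hdisj x hx' (hr2sub x (hTsub x hx))
          exact hynr2 (hxy ▸ (hTsub x hx))
        have hEpath : E.IsPath := by
          rw [Walk.isPath_def, hEsupp]
          exact List.Nodup.append hTpath.support_nodup hqpath.reverse.support_nodup hTdisj
        have hwa1 : w ≠ a1 := by
          intro h
          subst h
          exact hzA (path_loop_support hr2path z hzr2 ▸ ha1A)
        refine hShrink E hEpath h01.symm ha1A ha0A ?_ ?_ ?_ ⟨w, ?_, ?_⟩
        · intro x hx hxA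
          rcases (hEmem x).1 hx with hx' | hx'
          · exact Or.inl (hdropA x (hr2sub x (hTsub x hx')) hxA)
          · exact Or.inr (htakeA x hx' hxA)
        · intro x hx
          rcases (hEmem x).1 hx with hx' | hx'
          · exact hsuppC x (hdropsub x (hr2sub x (hTsub x hx')))
          · exact hsuppC x (htakesub x hx')
        · exact (hEmem y).2 (Or.inr (Walk.end_mem_support _))
        · exact (hYiff w).2 ⟨hdropsub w hwr, hwa0, hwa1⟩
        · intro hwE
          rcases (hEmem w).1 hwE with h | h
          · exact hwnT h
          · exact hwy (hdisj w h hwr)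
  · rintro (rfl | rfl)
    exacts [⟨hu, huC⟩, ⟨hwadj, hwC⟩]

end SDProof

theorem stmt10 {V : Type*} [Fintype V] (G : SimpleGraph V) (hG : TwoVC G) :
    SDProperty (Cv G) := by
  classical
  intro C hc C' hc' hlt Y hY
  obtain ⟨hYne, hYC, hCY, hminz⟩ := hY
  by_cases hint : (Y ∩ C').Nonempty
  case neg => exact Or.inr (Set.not_nonempty_iff_eq_empty.1 hint)
  refine Or.inl ?_
  by_contra hns
  obtain ⟨y0, hy0Y, hy0C'⟩ := Set.not_subset.1 hns
  obtain ⟨y', hy'Y, hy'C'⟩ := hint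
  have hCC' : C' ⊆ C := subset_of_ssubset hlt
  have hCon : TwoVCOn G C := twoVC_iff_twoVCOn.1 hc
  have hCon' : TwoVCOn G C' := twoVC_iff_twoVCOn.1 hc'
  have hAon : TwoVCOn G (C \ Y) := twoVC_iff_twoVCOn.1 hCY
  have hmin : ∀ S : Set V, S ⊆ Y → S.Nonempty → S ≠ Y → ¬ TwoVCOn G ((C \ Y) ∪ S) := by
    intro S hSY hSne hSneY hcon
    have hZne : (Y \ S).Nonempty := by
      rw [Set.diff_nonempty]
      exact fun h => hSneY (Set.Subset.antisymm hSY h)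
    have hZss : Y \ S ⊂ Y := by
      obtain ⟨s, hs⟩ := hSne
      exact ⟨Set.diff_subset, fun h => (h (hSY hs)).2 hs⟩
    refine hminz (Y \ S) hZne hZss ?_
    have heq : C \ (Y \ S) = (C \ Y) ∪ S := by
      ext x
      simp only [Set.mem_diff, Set.mem_union]
      constructor
      · rintro ⟨hxC, hx⟩
        by_cases hxY : x ∈ Y
        · right
          by_contra hxS
          exact hx ⟨hxY, hxS⟩
        · exact Or.inl ⟨hxC, hxY⟩
      · rintro (⟨hxC, hxY⟩ | hxS)
        · exact ⟨hxC, fun h => hxY h.1⟩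
        · exact ⟨hYC (hSY hxS), fun h => h.2 hxS⟩
    rw [heq]
    exact twoVC_iff_twoVCOn.2 hcon
  have hY2 : ∃ u ∈ Y, ∃ w ∈ Y, u ≠ w :=
    ⟨y0, hy0Y, y', hy'Y, fun h => hy0C' (h ▸ hy'C')⟩
  obtain ⟨hConnY, hdeg⟩ := struct hCon hAon hYC hY2 hmin
  obtain ⟨uu, vv, huuY, huuC', hvvY, hvvC', hadj⟩ :=
    crossing hConnY hy'Y hy0Y hy'C' hy0C'
  obtain ⟨u, w, huw, hN⟩ := hdeg uu huuY
  obtain ⟨a, b, haC', hbC', hadja, hadjb, hab⟩ := hCon'.two_nbrs huuC'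
  have haN : a ∈ ({u, w} : Set V) := hN ▸ ⟨hadja, hCC' haC'⟩
  have hbN : b ∈ ({u, w} : Set V) := hN ▸ ⟨hadjb, hCC' hbC'⟩
  have hsubC' : ({u, w} : Set V) ⊆ C' := by
    intro x hx
    simp only [Set.mem_insert_iff, Set.mem_singleton_iff] at hx haN hbN
    rcases haN with rfl | rfl <;> rcases hbN with rfl | rfl
    · exact absurd rfl hab
    · rcases hx with rfl | rfl
      exacts [haC', hbC']
    · rcases hx with rfl | rfl
      exacts [hbC', haC']
    · exact absurd rfl hab
  have hvvN : vv ∈ ({u, w} : Set V) := hN ▸ ⟨hadj, hYC hvvY⟩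
  exact hvvC' (hsubC' hvvN)
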